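/- In a semistandard Young tableau T with n(T) = 0 (strict), consider two adjacent columns and let a be the highest entry of the left column not appearing in the right column ('distinct'). If the entry c directly to the right of a satisfies c < b where b is the entry directly below a in the left column, then c does not appear in the left column (c is a distinct entry of the right column). -/
import Mathlib


/-- A semistandard Young tableau presented by columns: `m` columns, column `j`
of length `colLen j` (weakly decreasing in `j`), entries `σ r j`; rows weakly
increase and columns strictly increase. -/
def IsSSYTcols (m : ℕ) (colLen : ℕ → ℕ) (σ : ℕ → ℕ → ℕ) : Prop :=
  (∀ j, j + 1 < m → colLen (j + 1) ≤ colLen j) ∧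
  (∀ j, j + 1 < m → ∀ r < colLen (j + 1), σ r j ≤ σ r (j + 1)) ∧
  (∀ j < m, ∀ r, r + 1 < colLen j → σ r j < σ (r + 1) j)

/-- Length of row `r` of the subtableau of cells with entries `≤ v`. -/
noncomputable def rhoLE (m : ℕ) (colLen : ℕ → ℕ) (σ : ℕ → ℕ → ℕ) (r v : ℕ) : ℕ :=
  Set.ncard {j : ℕ | j < m ∧ r < colLen j ∧ σ r j ≤ v}

/-- `T` is strict (its Gelfand–Tsetlin pattern has strictly decreasing rows,
equivalently `n(T) = 0`): for every threshold `v`, the row lengths of the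
subtableau of entries `≤ v` are strictly decreasing while nonzero. -/
def IsStrictT (m : ℕ) (colLen : ℕ → ℕ) (σ : ℕ → ℕ → ℕ) : Prop :=
  ∀ v r, 0 < rhoLE m colLen σ (r + 1) v →
    rhoLE m colLen σ (r + 1) v < rhoLE m colLen σ r v

lemma col_strictMono (m : ℕ) (colLen : ℕ → ℕ) (σ : ℕ → ℕ → ℕ)
    (hssyt : IsSSYTcols m colLen σ) (j : ℕ) (hjm : j < m) :
    ∀ r1 r2, r1 < r2 → r2 < colLen j → σ r1 j < σ r2 j := by
  intro r1 r2 h12 h2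
  induction r2 with
  | zero => omega
  | succ n ih =>
    rcases Nat.lt_succ_iff_lt_or_eq.mp h12 with h | h
    · exact (ih h (by omega)).trans (hssyt.2.2 j hjm n h2)
    · subst h; exact hssyt.2.2 j hjm r1 h2

/-- Structural step in the proof of Proposition 4.8: in a strict SSYT, consider
adjacent columns `j, j+1` and let `a = σ ra j` be the highest entry of the left
column not appearing in the right column. If the entry `c = σ ra (j+1)`
directly to the right of `a` is strictly smaller than the entry
`b = σ (ra+1) j` directly below `a`, then `c` does not appear in the left
column. -/
theorem highest_distinct_right_neighbor_distinct (m : ℕ) (colLen : ℕ → ℕ)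
    (σ : ℕ → ℕ → ℕ)
    (hssyt : IsSSYTcols m colLen σ) (hstrict : IsStrictT m colLen σ)
    (j ra : ℕ) (hj : j + 1 < m)
    (hra : ra < colLen j)
    -- `a` is distinct (does not appear in the right column):
    (hdist : ∀ r' < colLen (j + 1), σ ra j ≠ σ r' (j + 1))
    -- `a` is the highest such entry:
    (hhighest : ∀ r < ra, ∃ r' < colLen (j + 1), σ r j = σ r' (j + 1))
    (hb : ra + 1 < colLen j)        -- the entry `b` below `a` exists
    (hc : ra < colLen (j + 1))      -- the entry `c` to the right of `a` exists
    (hcb : σ ra (j + 1) < σ (ra + 1) j) :   -- `c < b`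
    ∀ r < colLen j, σ r j ≠ σ ra (j + 1) := by
  intro r hr heq
  have hac : σ ra j ≤ σ ra (j + 1) := hssyt.2.1 j hj ra hc
  rcases lt_trichotomy r ra with h | h | h
  · have := col_strictMono m colLen σ hssyt j (by omega) r ra h hra
    omega
  · rw [h] at heq; exact hdist ra hc heq
  · have := col_strictMono m colLen σ hssyt j (by omega) ra r h hr
    have hbr : σ (ra + 1) j ≤ σ r j := by
      rcases Nat.lt_or_ge (ra + 1) r with h' | h'
      · exact (col_strictMono m colLen σ hssyt j (by omega) (ra+1) r h' hr).le
      · have : r = ra + 1 := by omega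
        simp [this]
    omega
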